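/- Let β : ℝ² → ℝ be a positive C¹ function, ψ : ℝ² → ℂ a C¹ function, r > 0, and let k, k^⊥ ∈ ℝ² be orthonormal vectors with det([k, k^⊥]) = 1. Set ρ := r(k + i k^⊥) ∈ ℂ² and define u : ℝ² → ℂ by u(x) = β(x)^{−1/2} e^{ρ·x} (1 + ψ(x)), and φ(x) := ∇ψ(x) + ψ(x)ρ − (1+ψ(x)) ∇β(x)/(2β(x)) ∈ ℂ². Then for every x ∈ ℝ², det([∇(Re u)(x), ∇(Im u)(x)]) = β(x)^{−1} e^{2r (k·x)} · det([ r k + Re φ(x), r k^⊥ + Im φ(x) ]). -/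

import Mathlib

open Matrix

/-- The gradient of a real-valued function on ℝ², as a vector of partial derivatives. -/
noncomputable def grad (u : (Fin 2 → ℝ) → ℝ) (x : Fin 2 → ℝ) : Fin 2 → ℝ :=
  fun i => fderiv ℝ u x (Pi.single i 1)

/-- The `i`-th partial derivative of a function on ℝ² (componentwise for vector values). -/
noncomputable def pd {E : Type*} [NormedAddCommGroup E] [NormedSpace ℝ E]
    (i : Fin 2) (f : (Fin 2 → ℝ) → E) (x : Fin 2 → ℝ) : E :=
  fderiv ℝ f x (Pi.single i 1)

/-- The 2×2 matrix with columns `a` and `b`. -/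
def col2 (a b : Fin 2 → ℝ) : Matrix (Fin 2) (Fin 2) ℝ :=
  Matrix.of fun i => ![a i, b i]

/-- Determinant identity for the CGO ansatz `u = β^{-1/2} e^{ρ·x}(1+ψ)` with
`ρ = r(k + ik^⊥)`: `det(∇(Re u), ∇(Im u)) = β⁻¹ e^{2rk·x} det(rk + Re φ, rk^⊥ + Im φ)`,
where `φ = ∇ψ + ψρ − (1+ψ)∇β/(2β)`. -/
theorem stmt16 (β : (Fin 2 → ℝ) → ℝ) (hβpos : ∀ x, 0 < β x) (hβC : ContDiff ℝ 1 β)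
    (ψ : (Fin 2 → ℝ) → ℂ) (hψC : ContDiff ℝ 1 ψ)
    (r : ℝ) (hr : 0 < r) (k k' : Fin 2 → ℝ)
    (hk : k ⬝ᵥ k = 1) (hk' : k' ⬝ᵥ k' = 1) (hkk' : k ⬝ᵥ k' = 0)
    (hor : (col2 k k').det = 1) :
    ∀ x : Fin 2 → ℝ,
      (col2
        (grad (fun y => (((Real.sqrt (β y))⁻¹ : ℂ) *
          Complex.exp (∑ j : Fin 2, (r : ℂ) * ((k j : ℂ) + Complex.I * (k' j : ℂ)) * (y j : ℂ)) *
          (1 + ψ y)).re) x)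
        (grad (fun y => (((Real.sqrt (β y))⁻¹ : ℂ) *
          Complex.exp (∑ j : Fin 2, (r : ℂ) * ((k j : ℂ) + Complex.I * (k' j : ℂ)) * (y j : ℂ)) *
          (1 + ψ y)).im) x)).det =
      (β x)⁻¹ * Real.exp (2 * r * (k ⬝ᵥ x)) *
        (col2
          (fun i => r * k i + (pd i ψ x + ψ x * ((r : ℂ) * ((k i : ℂ) + Complex.I * (k' i : ℂ))) -
            (1 + ψ x) * ((pd i β x / (2 * β x) : ℝ) : ℂ)).re)
          (fun i => r * k' i + (pd i ψ x + ψ x * ((r : ℂ) * ((k i : ℂ) + Complex.I * (k' i : ℂ))) -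
            (1 + ψ x) * ((pd i β x / (2 * β x) : ℝ) : ℂ)).im)).det := by
  intro x
  set ρ : Fin 2 → ℂ := fun j => (r : ℂ) * ((k j : ℂ) + Complex.I * (k' j : ℂ)) with hρ
  have hβx : (0:ℝ) < β x := hβpos x
  have hsx : Real.sqrt (β x) ≠ 0 := (Real.sqrt_pos.2 hβx).ne'
  have hβd : HasFDerivAt β (fderiv ℝ β x) x := (hβC.differentiable one_ne_zero x).hasFDerivAt
  have hψd : HasFDerivAt ψ (fderiv ℝ ψ x) x := (hψC.differentiable one_ne_zero x).hasFDerivAt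
  -- derivative of (sqrt β)⁻¹ as a real function
  have hsqrt : HasFDerivAt (fun y => Real.sqrt (β y))
      ((1 / (2 * Real.sqrt (β x))) • fderiv ℝ β x) x := hβd.sqrt hβx.ne'
  have hinv : HasFDerivAt (fun y => (Real.sqrt (β y))⁻¹)
      ((-((Real.sqrt (β x)) ^ 2)⁻¹) • ((1 / (2 * Real.sqrt (β x))) • fderiv ℝ β x)) x :=
    (hasDerivAt_inv hsx).comp_hasFDerivAt x hsqrt
  set Dh : (Fin 2 → ℝ) →L[ℝ] ℝ :=
    (-((Real.sqrt (β x)) ^ 2)⁻¹) • ((1 / (2 * Real.sqrt (β x))) • fderiv ℝ β x) with hDh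
  have hg : HasFDerivAt (fun y => ((Real.sqrt (β y))⁻¹ : ℂ))
      (Complex.ofRealCLM.comp Dh) x := by
    have h := Complex.ofRealCLM.hasFDerivAt.comp x hinv
    simpa only [Function.comp_def, Complex.ofRealCLM_apply, Complex.ofReal_inv] using h
  -- derivative of the linear phase
  set L : (Fin 2 → ℝ) →L[ℝ] ℂ :=
    ∑ j : Fin 2, ρ j • (Complex.ofRealCLM.comp (ContinuousLinearMap.proj j)) with hL
  have hLval : ∀ y : Fin 2 → ℝ, L y = ∑ j : Fin 2, ρ j * (y j : ℂ) := by
    intro y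
    simp [hL, ContinuousLinearMap.sum_apply, smul_eq_mul]
  have hS : HasFDerivAt (fun y => ∑ j : Fin 2, ρ j * (y j : ℂ)) L x := by
    have hfun : (fun y : Fin 2 → ℝ => ∑ j : Fin 2, ρ j * (y j : ℂ)) = ⇑L :=
      funext fun y => (hLval y).symm
    rw [hfun]; exact L.hasFDerivAt
  set Sx : ℂ := ∑ j : Fin 2, ρ j * (x j : ℂ) with hSx
  have hE : HasFDerivAt (fun y => Complex.exp (∑ j : Fin 2, ρ j * (y j : ℂ)))
      (Complex.exp Sx • L) x := hS.cexp
  have h1ψ : HasFDerivAt (fun y => 1 + ψ y) (fderiv ℝ ψ x) x := hψd.const_add 1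
  have hgE := hg.mul hE
  have hu := hgE.mul h1ψ
  set F := (((Real.sqrt (β x))⁻¹ : ℂ) * Complex.exp Sx) • fderiv ℝ ψ x +
      (1 + ψ x) • (((Real.sqrt (β x))⁻¹ : ℂ) • (Complex.exp Sx • L) +
        Complex.exp Sx • (Complex.ofRealCLM.comp Dh)) with hF
  have hu' : HasFDerivAt (fun y => ((Real.sqrt (β y))⁻¹ : ℂ) *
      Complex.exp (∑ j : Fin 2, ρ j * (y j : ℂ)) * (1 + ψ y)) F x := hu
  -- the key value computation
  set A : ℂ := ((Real.sqrt (β x))⁻¹ : ℂ) * Complex.exp Sx with hA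
  set φ : Fin 2 → ℂ := fun i => fderiv ℝ ψ x (Pi.single i 1) + ψ x * ρ i -
      (1 + ψ x) * ((fderiv ℝ β x (Pi.single i 1) / (2 * β x) : ℝ) : ℂ) with hφ
  have hLsingle : ∀ i, L (Pi.single i 1) = ρ i := by
    intro i
    rw [hLval]
    fin_cases i <;> simp [Pi.single_apply]
  have hval : ∀ i, F (Pi.single i 1) = A * (ρ i + φ i) := by
    intro i
    have hss : (Real.sqrt (β x) : ℂ) * (Real.sqrt (β x) : ℂ) = (β x : ℂ) := by
      norm_cast
      exact Real.mul_self_sqrt hβx.le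
    have hβc : (β x : ℂ) ≠ 0 := by exact_mod_cast hβx.ne'
    have hsc : ((Real.sqrt (β x) : ℝ) : ℂ) ≠ 0 := by exact_mod_cast hsx
    simp only [hF, ContinuousLinearMap.add_apply, ContinuousLinearMap.smul_apply,
      ContinuousLinearMap.comp_apply, Complex.ofRealCLM_apply, hLsingle, hDh,
      ContinuousLinearMap.coe_smul', Pi.smul_apply, hA, hφ, smul_eq_mul]
    push_cast
    have hb2 : ((β x : ℝ) : ℂ) = ((Real.sqrt (β x) : ℝ) : ℂ) ^ 2 := by
      rw [← hss]; ring
    rw [hb2]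
    field_simp
    have hts : ((Real.sqrt (β x) : ℝ) : ℂ)⁻¹ ^ 5 * ((Real.sqrt (β x) : ℝ) : ℂ) ^ 5 = 1 := by
      rw [inv_pow]; exact inv_mul_cancel₀ (pow_ne_zero 5 hsc)
    ring
  -- real and imaginary parts
  have hre : grad (fun y => (((Real.sqrt (β y))⁻¹ : ℂ) *
      Complex.exp (∑ j : Fin 2, ρ j * (y j : ℂ)) * (1 + ψ y)).re) x =
      fun i => (A * (ρ i + φ i)).re := by
    funext i
    have h := (Complex.reCLM.hasFDerivAt.comp x hu').fderiv
    simp only [grad]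
    rw [show (fun y => (((Real.sqrt (β y))⁻¹ : ℂ) *
      Complex.exp (∑ j : Fin 2, ρ j * (y j : ℂ)) * (1 + ψ y)).re) =
      Complex.reCLM ∘ (fun y => ((Real.sqrt (β y))⁻¹ : ℂ) *
      Complex.exp (∑ j : Fin 2, ρ j * (y j : ℂ)) * (1 + ψ y)) from rfl, h]
    simp [hval i]
  have him : grad (fun y => (((Real.sqrt (β y))⁻¹ : ℂ) *
      Complex.exp (∑ j : Fin 2, ρ j * (y j : ℂ)) * (1 + ψ y)).im) x =
      fun i => (A * (ρ i + φ i)).im := by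
    funext i
    have h := (Complex.imCLM.hasFDerivAt.comp x hu').fderiv
    simp only [grad]
    rw [show (fun y => (((Real.sqrt (β y))⁻¹ : ℂ) *
      Complex.exp (∑ j : Fin 2, ρ j * (y j : ℂ)) * (1 + ψ y)).im) =
      Complex.imCLM ∘ (fun y => ((Real.sqrt (β y))⁻¹ : ℂ) *
      Complex.exp (∑ j : Fin 2, ρ j * (y j : ℂ)) * (1 + ψ y)) from rfl, h]
    simp [hval i]
  -- squared modulus of A
  have hnormA : A.re ^ 2 + A.im ^ 2 = (β x)⁻¹ * Real.exp (2 * r * (k ⬝ᵥ x)) := by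
    have h1 : A.re ^ 2 + A.im ^ 2 = Complex.normSq A := by
      simp [Complex.normSq_apply]; ring
    rw [h1, hA, Complex.normSq_mul]
    have h2 : Complex.normSq (((Real.sqrt (β x) : ℝ) : ℂ))⁻¹ = (β x)⁻¹ := by
      rw [map_inv₀, Complex.normSq_ofReal, Real.mul_self_sqrt hβx.le]
    have h3 : Complex.normSq (Complex.exp Sx) = Real.exp (2 * r * (k ⬝ᵥ x)) := by
      rw [← Complex.sq_norm, Complex.norm_exp, sq, ← Real.exp_add]
      congr 1
      have : Sx.re = r * (k ⬝ᵥ x) := by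
        simp [hSx, hρ, Complex.re_sum, Complex.mul_re, Complex.add_re, Complex.mul_im,
          dotProduct, Finset.mul_sum]
        ring
      rw [this]; ring
    rw [h2, h3]
  -- finish: expand determinants
  rw [hre, him]
  have hpd : ∀ i, (pd i ψ x + ψ x * ρ i -
      (1 + ψ x) * ((pd i β x / (2 * β x) : ℝ) : ℂ)) = φ i := by
    intro i; rfl
  have hpd' : ∀ i, (pd i ψ x + ψ x * ((r : ℂ) * ((k i : ℂ) + Complex.I * (k' i : ℂ))) -
      (1 + ψ x) * ((pd i β x / (2 * β x) : ℝ) : ℂ)) = φ i := by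
    intro i; rfl
  simp only [col2, Matrix.det_fin_two, Matrix.of_apply, Matrix.cons_val', Matrix.cons_val_zero,
    Matrix.cons_val_one, Matrix.head_cons, Matrix.empty_val', Matrix.cons_val_fin_one]
  have hρre : ∀ i, (ρ i).re = r * k i := by
    intro i; simp [hρ, Complex.mul_re, Complex.add_re, Complex.mul_im]
  have hρim : ∀ i, (ρ i).im = r * k' i := by
    intro i; simp [hρ, Complex.mul_im, Complex.add_im, Complex.mul_re]
  simp only [hpd, hpd', Complex.mul_re, Complex.mul_im, Complex.add_re, Complex.add_im, hρre, hρim]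
  linear_combination ((r * k 0 + (φ 0).re) * (r * k' 1 + (φ 1).im) -
    (r * k' 0 + (φ 0).im) * (r * k 1 + (φ 1).re)) * hnormA
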